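/- If a nonempty finite weighted hypergraph G is disconnected, then the energy function f attains no minimum on U: for every (x_1,...,x_k) ∈ U there exists (y_1,...,y_k) ∈ U with f(y_1,...,y_k) < f(x_1,...,x_k). -/

import Mathlib

open Finset in
/-- The energy function of a weighted hypergraph. -/
noncomputable def hyperEnergy {k l d : ℕ} (e : Fin l → Finset (Fin k))
    (c : Fin l → ℝ) (w : Fin k → ℝ) (α β γ δ : ℝ)
    (x : Fin k → EuclideanSpace ℝ (Fin d)) : ℝ :=
  α / 2 * ∑ j, c j * ∑ i ∈ e j,
      ‖x i - ((e j).card : ℝ)⁻¹ • ∑ i' ∈ e j, x i'‖ ^ γ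
  + β / 2 * ∑ j : Fin k, ∑ i ∈ univ.erase j, w i * w j / ‖x i - x j‖ ^ δ

/-- If a nonempty finite weighted hypergraph is disconnected
(its vertex set splits into two disjoint nonempty parts such that every hyperedge is
contained in one of the parts), then the energy function attains no minimum on `U`:
every layout of pairwise distinct points can be strictly improved. -/
theorem hyperEnergy_no_min_of_disconnected {k l d : ℕ} (hk : 1 ≤ k) (hd : 3 ≤ d)
    (e : Fin l → Finset (Fin k)) (he : ∀ j, (e j).Nonempty)
    (c : Fin l → ℝ) (w : Fin k → ℝ) (α β γ δ : ℝ)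
    (hc : ∀ j, 0 < c j) (hw : ∀ i, 0 < w i)
    (hα : 0 < α) (hβ : 0 < β) (hγ : 0 < γ) (hδ : 0 < δ)
    (V₁ V₂ : Finset (Fin k)) (hV : V₁ ∪ V₂ = Finset.univ) (hdisj : Disjoint V₁ V₂)
    (hV₁ : V₁.Nonempty) (hV₂ : V₂.Nonempty)
    (hsplit : ∀ j, e j ⊆ V₁ ∨ e j ⊆ V₂) :
    ∀ x : Fin k → EuclideanSpace ℝ (Fin d), Function.Injective x →
      ∃ y : Fin k → EuclideanSpace ℝ (Fin d), Function.Injective y ∧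
        hyperEnergy e c w α β γ δ y < hyperEnergy e c w α β γ δ x := by
  intro x hx
  classical
  have hd0 : 0 < d := by omega
  set v : EuclideanSpace ℝ (Fin d) := EuclideanSpace.single ⟨0, hd0⟩ 1 with hvdef
  have hvnorm : ‖v‖ = 1 := by simp [hvdef]
  set M : ℝ := ∑ i : Fin k, ∑ j : Fin k, ‖x i - x j‖ with hMdef
  have hMle : ∀ i j : Fin k, ‖x i - x j‖ ≤ M := by
    intro i j
    calc ‖x i - x j‖ ≤ ∑ j' : Fin k, ‖x i - x j'‖ :=
          Finset.single_le_sum (f := fun j' => ‖x i - x j'‖)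
            (fun _ _ => norm_nonneg _) (Finset.mem_univ j)
      _ ≤ M := by
          rw [hMdef]
          exact Finset.single_le_sum (f := fun i' => ∑ j' : Fin k, ‖x i' - x j'‖)
            (fun i' _ => Finset.sum_nonneg fun _ _ => norm_nonneg _) (Finset.mem_univ i)
  have hM0 : 0 ≤ M := Finset.sum_nonneg fun _ _ => Finset.sum_nonneg fun _ _ => norm_nonneg _
  set R : ℝ := 2 * M + 1 with hRdef
  have hR0 : 0 < R := by rw [hRdef]; linarith
  have hRv : ‖R • v‖ = R := by
    rw [norm_smul, hvnorm, mul_one, Real.norm_eq_abs, abs_of_pos hR0]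
  set y : Fin k → EuclideanSpace ℝ (Fin d) :=
    fun i => x i + (if i ∈ V₂ then R • v else 0) with hydef
  have key : ∀ a b : EuclideanSpace ℝ (Fin d), ‖b‖ - ‖a‖ ≤ ‖a + b‖ := by
    intro a b
    have h1 : ‖b‖ = ‖(a + b) - a‖ := by rw [add_sub_cancel_left]
    have h2 : ‖(a + b) - a‖ ≤ ‖a + b‖ + ‖a‖ := norm_sub_le _ _
    linarith
  have hsame : ∀ i j : Fin k, (i ∈ V₂ ↔ j ∈ V₂) → y i - y j = x i - x j := by
    intro i j h
    by_cases hi : i ∈ V₂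
    · have hj := h.mp hi
      simp only [hydef, if_pos hi, if_pos hj]; abel
    · have hj : j ∉ V₂ := fun hj => hi (h.mpr hj)
      simp only [hydef, if_neg hi, if_neg hj]; abel
  have hcross : ∀ i j : Fin k, ¬(i ∈ V₂ ↔ j ∈ V₂) → ‖x i - x j‖ < ‖y i - y j‖ := by
    intro i j h
    have hlt : 2 * ‖x i - x j‖ < R := by
      have := hMle i j; rw [hRdef]; linarith
    by_cases hi : i ∈ V₂
    · have hj : j ∉ V₂ := fun hj => h ⟨fun _ => hj, fun _ => hi⟩
      have heq : y i - y j = (x i - x j) + R • v := by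
        simp only [hydef, if_pos hi, if_neg hj]; abel
      rw [heq]
      have := key (x i - x j) (R • v)
      rw [hRv] at this
      linarith
    · have hj : j ∈ V₂ := by
        by_contra hj
        exact h ⟨fun h' => absurd h' hi, fun h' => absurd h' hj⟩
      have heq : y i - y j = (x i - x j) + (-(R • v)) := by
        simp only [hydef, if_neg hi, if_pos hj]; abel
      rw [heq]
      have := key (x i - x j) (-(R • v))
      rw [norm_neg, hRv] at this
      linarith
  have hy_inj : Function.Injective y := by
    intro i j hij
    by_cases h : (i ∈ V₂ ↔ j ∈ V₂)
    · have h0 : x i - x j = 0 := by rw [← hsame i j h, hij, sub_self]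
      exact hx (sub_eq_zero.mp h0)
    · exfalso
      have := hcross i j h
      rw [hij, sub_self, norm_zero] at this
      have := norm_nonneg (x i - x j)
      linarith
  have hxpos : ∀ i j : Fin k, i ≠ j → 0 < ‖x i - x j‖ := fun i j h =>
    norm_pos_iff.mpr (sub_ne_zero.mpr fun h' => h (hx h'))
  have hterm_lt : ∀ i j : Fin k, i ≠ j → ¬(i ∈ V₂ ↔ j ∈ V₂) →
      w i * w j / ‖y i - y j‖ ^ δ < w i * w j / ‖x i - x j‖ ^ δ := by
    intro i j hij h
    have h1 := hxpos i j hij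
    have h2 := hcross i j h
    have hp : ‖x i - x j‖ ^ δ < ‖y i - y j‖ ^ δ := Real.rpow_lt_rpow h1.le h2 hδ
    have hp0 : 0 < ‖x i - x j‖ ^ δ := Real.rpow_pos_of_pos h1 δ
    exact div_lt_div_of_pos_left (mul_pos (hw i) (hw j)) hp0 hp
  have hterm_le : ∀ i j : Fin k, i ≠ j →
      w i * w j / ‖y i - y j‖ ^ δ ≤ w i * w j / ‖x i - x j‖ ^ δ := by
    intro i j hij
    by_cases h : (i ∈ V₂ ↔ j ∈ V₂)
    · rw [hsame i j h]
    · exact (hterm_lt i j hij h).le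
  have hT1 : ∀ j : Fin l,
      (∑ i ∈ e j, ‖y i - ((e j).card : ℝ)⁻¹ • ∑ i' ∈ e j, y i'‖ ^ γ)
      = ∑ i ∈ e j, ‖x i - ((e j).card : ℝ)⁻¹ • ∑ i' ∈ e j, x i'‖ ^ γ := by
    intro j
    have hcard : ((e j).card : ℝ) ≠ 0 := by
      exact_mod_cast (Finset.card_pos.mpr (he j)).ne'
    rcases hsplit j with hsub | hsub
    · have hyx : ∀ i ∈ e j, y i = x i := by
        intro i hi
        have h2 : i ∉ V₂ := Finset.disjoint_left.mp hdisj (hsub hi)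
        simp only [hydef, if_neg h2, add_zero]
      refine Finset.sum_congr rfl fun i hi => ?_
      rw [hyx i hi, Finset.sum_congr rfl hyx]
    · have hyx : ∀ i ∈ e j, y i = x i + R • v := by
        intro i hi
        simp only [hydef, if_pos (hsub hi)]
      have hsum : ∑ i' ∈ e j, y i' = (∑ i' ∈ e j, x i') + (e j).card • (R • v) := by
        rw [Finset.sum_congr rfl hyx, Finset.sum_add_distrib, Finset.sum_const]
      refine Finset.sum_congr rfl fun i hi => ?_
      rw [hyx i hi, hsum]
      have hveq : x i + R • v -
          ((e j).card : ℝ)⁻¹ • ((∑ i' ∈ e j, x i') + (e j).card • (R • v))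
          = x i - ((e j).card : ℝ)⁻¹ • ∑ i' ∈ e j, x i' := by
        rw [smul_add, ← Nat.cast_smul_eq_nsmul ℝ (e j).card (R • v), smul_smul,
          inv_mul_cancel₀ hcard, one_smul]
        abel
      rw [hveq]
  have hT2 : (∑ j : Fin k, ∑ i ∈ Finset.univ.erase j, w i * w j / ‖y i - y j‖ ^ δ)
      < ∑ j : Fin k, ∑ i ∈ Finset.univ.erase j, w i * w j / ‖x i - x j‖ ^ δ := by
    obtain ⟨i₀, hi₀⟩ := hV₁
    obtain ⟨j₀, hj₀⟩ := hV₂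
    have hne : i₀ ≠ j₀ := fun h => Finset.disjoint_left.mp hdisj hi₀ (h ▸ hj₀)
    apply Finset.sum_lt_sum
    · intro j _
      exact Finset.sum_le_sum fun i hi => hterm_le i j (Finset.ne_of_mem_erase hi)
    · refine ⟨j₀, Finset.mem_univ _, ?_⟩
      apply Finset.sum_lt_sum
      · intro i hi
        exact hterm_le i j₀ (Finset.ne_of_mem_erase hi)
      · refine ⟨i₀, Finset.mem_erase.mpr ⟨hne, Finset.mem_univ _⟩, ?_⟩
        refine hterm_lt i₀ j₀ hne fun h => ?_
        exact Finset.disjoint_left.mp hdisj hi₀ (h.mpr hj₀)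
  refine ⟨y, hy_inj, ?_⟩
  unfold hyperEnergy
  have h1 : α / 2 * (∑ j, c j * ∑ i ∈ e j, ‖y i - ((e j).card : ℝ)⁻¹ • ∑ i' ∈ e j, y i'‖ ^ γ)
      = α / 2 * (∑ j, c j * ∑ i ∈ e j, ‖x i - ((e j).card : ℝ)⁻¹ • ∑ i' ∈ e j, x i'‖ ^ γ) := by
    congr 1
    exact Finset.sum_congr rfl fun j _ => by rw [hT1 j]
  rw [h1]
  exact (add_lt_add_iff_left _).mpr (mul_lt_mul_of_pos_left hT2 (by positivity))
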